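/- Let r ≥ 2 and let H be an r-graph on an n-element vertex set V. Suppose that for all disjoint sets X, Y ⊆ V such that X is nonempty and independent and |Y| ≤ (r−1)|X|, there is an edge of H meeting X and disjoint from Y. Then H has a perfect fractional matching, and the constant function w ≡ 1/r is the only fractional cover of H of weight n/r. -/

import Mathlib

open Finset

private lemma mset_max (A : Multiset ℝ) (h : A ≠ 0) : ∃ a ∈ A, ∀ x ∈ A, x ≤ a := by
  induction A using Multiset.induction with
  | empty => simp at h
  | cons c S ih =>
    rcases eq_or_ne S 0 with rfl | hS
    · exact ⟨c, Multiset.mem_cons_self _ _, by simp⟩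
    · obtain ⟨a, haS, hmax⟩ := ih hS
      rcases le_total c a with h' | h'
      · refine ⟨a, Multiset.mem_cons_of_mem haS, ?_⟩
        intro x hx
        rcases Multiset.mem_cons.1 hx with rfl | hx
        exacts [h', hmax x hx]
      · refine ⟨c, Multiset.mem_cons_self _ _, ?_⟩
        intro x hx
        rcases Multiset.mem_cons.1 hx with rfl | hx
        exacts [le_rfl, (hmax x hx).trans h']

private lemma dom (A : Multiset ℝ) : ∀ B : Multiset ℝ, (∀ x ∈ A, 0 ≤ x) → (∀ x ∈ B, 0 ≤ x) →
    (∀ t : ℝ, 0 < t → (A.filter (t ≤ ·)).card ≤ (B.filter (t ≤ ·)).card) → A.sum ≤ B.sum := by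
  induction A using Multiset.strongInductionOn with
  | _ A ih =>
  intro B hA hB hd
  rcases eq_or_ne A 0 with rfl | hne
  · simpa using Multiset.sum_nonneg hB
  obtain ⟨a, haA, hamax⟩ := mset_max A hne
  by_cases hapos : 0 < a
  · have h1 : 0 < Multiset.card (B.filter (a ≤ ·)) := by
      refine lt_of_lt_of_le ?_ (hd a hapos)
      rw [Multiset.card_pos_iff_exists_mem]
      exact ⟨a, Multiset.mem_filter.2 ⟨haA, le_rfl⟩⟩
    obtain ⟨b, hbf⟩ := Multiset.card_pos_iff_exists_mem.1 h1
    have hbB : b ∈ B := (Multiset.mem_filter.1 hbf).1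
    have hab : a ≤ b := (Multiset.mem_filter.1 hbf).2
    have hAe : a ::ₘ A.erase a = A := Multiset.cons_erase haA
    have hBe : b ::ₘ B.erase b = B := Multiset.cons_erase hbB
    have key := ih (A.erase a) (Multiset.erase_lt.2 haA) (B.erase b)
      (fun x hx => hA x (Multiset.mem_of_mem_erase hx))
      (fun x hx => hB x (Multiset.mem_of_mem_erase hx))
      (by
        intro t ht
        by_cases hta : t ≤ a
        · have hd' := hd t ht
          have e1 : (A.filter (t ≤ ·)).card = ((A.erase a).filter (t ≤ ·)).card + 1 := by
            conv_lhs => rw [← hAe]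
            rw [Multiset.filter_cons, if_pos hta, Multiset.card_add]
            simp [add_comm]
          have e2 : (B.filter (t ≤ ·)).card = ((B.erase b).filter (t ≤ ·)).card + 1 := by
            conv_lhs => rw [← hBe]
            rw [Multiset.filter_cons, if_pos (hta.trans hab), Multiset.card_add]
            simp [add_comm]
          omega
        · have : (A.erase a).filter (t ≤ ·) = 0 := by
            rw [Multiset.filter_eq_nil]
            intro x hx
            have := hamax x (Multiset.mem_of_mem_erase hx)
            intro hc; exact hta (hc.trans this)
          simp [this])
    have sA : A.sum = a + (A.erase a).sum := by rw [← Multiset.sum_cons, hAe]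
    have sB : B.sum = b + (B.erase b).sum := by rw [← Multiset.sum_cons, hBe]
    rw [sA, sB]
    exact add_le_add hab key
  · have hz : A.sum = 0 := by
      apply Multiset.sum_eq_zero
      intro x hx
      exact le_antisymm ((hamax x hx).trans (not_lt.1 hapos)) (hA x hx)
    rw [hz]
    exact Multiset.sum_nonneg hB

private lemma sum_nsmul' (k : ℕ) (M : Multiset ℝ) : (k • M).sum = k * M.sum := by
  induction k with
  | zero => simp
  | succ n ih => rw [succ_nsmul, Multiset.sum_add, ih]; push_cast; ring

private lemma count_pos {V : Type*} [Fintype V] (k : ℕ) (hk : 0 < k) (y : V → ℝ)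
    (h2 : ∀ t : ℝ, 0 < t → (Finset.univ.filter (fun v => y v ≤ -t)).Nonempty →
      k * (Finset.univ.filter (fun v => y v ≤ -t)).card
        < (Finset.univ.filter (fun v => t ≤ (k : ℝ) * y v)).card)
    (hneg : ∃ v, y v < 0) : 0 < ∑ v, y v := by
  classical
  obtain ⟨v₀, hv₀⟩ := hneg
  set T : ℝ := -y v₀ with hT
  have hTpos : 0 < T := by rw [hT]; linarith
  set N : Finset V := Finset.univ.filter (fun v => y v < 0) with hN
  set P : Finset V := Finset.univ.filter (fun v => 0 < y v) with hP
  set A : Multiset ℝ := T ::ₘ (k • (N.val.map (fun v => -y v))) with hA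
  set B : Multiset ℝ := P.val.map (fun v => (k : ℝ) * y v) with hB
  have hAsum : A.sum = T + k * ∑ v ∈ N, (-y v) := by
    rw [hA, Multiset.sum_cons, sum_nsmul', Finset.sum_eq_multiset_sum]
  have hBsum : B.sum = (k : ℝ) * ∑ v ∈ P, y v := by
    rw [hB, Finset.sum_eq_multiset_sum, ← Multiset.sum_map_mul_left]
  have cardA : ∀ t : ℝ, 0 < t → (A.filter (t ≤ ·)).card
      = (if t ≤ T then 1 else 0) + k * (Finset.univ.filter (fun v => y v ≤ -t)).card := by
    intro t ht
    rw [hA, Multiset.filter_cons, Multiset.card_add, Multiset.filter_nsmul,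
      Multiset.card_nsmul]
    congr 1
    · split_ifs <;> simp
    · congr 1
      rw [← Multiset.countP_eq_card_filter, Multiset.countP_map]
      have : N.val.filter (fun v => t ≤ -y v)
          = (N.filter (fun v => t ≤ -y v)).val := rfl
      rw [this]
      have h3 : N.filter (fun v => t ≤ -y v)
          = Finset.univ.filter (fun v => y v ≤ -t) := by
        rw [hN, Finset.filter_filter]
        apply Finset.filter_congr
        intro v _
        constructor
        · rintro ⟨_, h⟩; linarith
        · intro h; constructor <;> linarith
      rw [h3]
      rfl
  have cardB : ∀ t : ℝ, 0 < t → (B.filter (t ≤ ·)).card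
      = (Finset.univ.filter (fun v => t ≤ (k : ℝ) * y v)).card := by
    intro t ht
    rw [hB, ← Multiset.countP_eq_card_filter, Multiset.countP_map]
    have : P.val.filter (fun v => t ≤ (k : ℝ) * y v)
        = (P.filter (fun v => t ≤ (k : ℝ) * y v)).val := rfl
    rw [this]
    have h3 : P.filter (fun v => t ≤ (k : ℝ) * y v)
        = Finset.univ.filter (fun v => t ≤ (k : ℝ) * y v) := by
      rw [hP, Finset.filter_filter]
      apply Finset.filter_congr
      intro v _
      have hk' : (0 : ℝ) < k := by exact_mod_cast hk
      constructor
      · rintro ⟨_, h⟩; exact h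
      · intro h
        refine ⟨?_, h⟩
        nlinarith
    rw [h3]
    rfl
  have hdom : A.sum ≤ B.sum := by
    apply dom
    · intro x hx
      rw [hA] at hx
      rcases Multiset.mem_cons.1 hx with rfl | hx
      · exact hTpos.le
      · obtain ⟨v, hv, rfl⟩ := Multiset.mem_map.1 (Multiset.mem_nsmul.1 hx).2
        have : v ∈ N := hv
        rw [hN, Finset.mem_filter] at this
        linarith [this.2]
    · intro x hx
      rw [hB] at hx
      obtain ⟨v, hv, rfl⟩ := Multiset.mem_map.1 hx
      have : v ∈ P := hv
      rw [hP, Finset.mem_filter] at this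
      have hk' : (0 : ℝ) ≤ k := by positivity
      nlinarith [this.2]
    · intro t ht
      rw [cardA t ht, cardB t ht]
      by_cases hxe : (Finset.univ.filter (fun v => y v ≤ -t)).Nonempty
      · have := h2 t ht hxe
        split_ifs <;> omega
      · have h0 : (Finset.univ.filter (fun v => y v ≤ -t)).card = 0 := by
          rw [Finset.card_eq_zero, Finset.filter_eq_empty_iff]
          intro v _ hc
          exact hxe ⟨v, Finset.mem_filter.2 ⟨Finset.mem_univ v, hc⟩⟩
        have hnT : ¬ t ≤ T := by
          intro hle
          exact hxe ⟨v₀, Finset.mem_filter.2 ⟨Finset.mem_univ v₀, by rw [hT] at hle; linarith⟩⟩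
        rw [if_neg hnT, h0]
        simp
  -- final arithmetic
  have hsplit : ∑ v, y v = ∑ v ∈ P, y v + ∑ v ∈ Finset.univ.filter (fun v => ¬ 0 < y v), y v := by
    rw [hP, Finset.sum_filter_add_sum_filter_not]
  have hnsum : ∑ v ∈ Finset.univ.filter (fun v => ¬ 0 < y v), y v = ∑ v ∈ N, y v := by
    symm
    apply Finset.sum_subset
    · intro v hv
      rw [hN, Finset.mem_filter] at hv
      exact Finset.mem_filter.2 ⟨Finset.mem_univ v, by linarith [hv.2]⟩
    · intro v hv hvn
      rw [Finset.mem_filter] at hv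
      rw [hN, Finset.mem_filter] at hvn
      push_neg at hv hvn
      have := hvn (Finset.mem_univ v)
      linarith [hv.2]
  have hkR : (0 : ℝ) < k := by exact_mod_cast hk
  have hAB : T + (k : ℝ) * ∑ v ∈ N, (-y v) ≤ (k : ℝ) * ∑ v ∈ P, y v := by
    rw [← hAsum, ← hBsum]; exact hdom
  rw [Finset.sum_neg_distrib] at hAB
  have : 0 < (k : ℝ) * ∑ v, y v := by
    rw [hsplit, hnsum]
    nlinarith
  nlinarith

private lemma key {V : Type*} [Fintype V] [DecidableEq V] (r : ℕ) (hr : 2 ≤ r)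
    (H : Finset (Finset V)) (hunif : ∀ e ∈ H, e.card = r)
    (hexp : ∀ X Y : Finset V, Disjoint X Y → X.Nonempty →
      (∀ e ∈ H, ¬ e ⊆ X) → Y.card ≤ (r - 1) * X.card →
      ∃ e ∈ H, (e ∩ X).Nonempty ∧ Disjoint e Y)
    (y : V → ℝ) (hy : ∀ e ∈ H, 0 ≤ ∑ v ∈ e, y v) :
    ∀ t : ℝ, 0 < t → (Finset.univ.filter (fun v => y v ≤ -t)).Nonempty →
      (r - 1) * (Finset.univ.filter (fun v => y v ≤ -t)).card
        < (Finset.univ.filter (fun v => t ≤ ((r - 1 : ℕ) : ℝ) * y v)).card := by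
  intro t ht hXne
  set X : Finset V := Finset.univ.filter (fun v => y v ≤ -t) with hX
  set Y : Finset V := Finset.univ.filter (fun v => t ≤ ((r - 1 : ℕ) : ℝ) * y v) with hY
  have hk1 : 1 ≤ r - 1 := by omega
  have hkR : (0 : ℝ) < ((r - 1 : ℕ) : ℝ) := by exact_mod_cast hk1
  by_contra hcon
  push_neg at hcon
  have hdisj : Disjoint X Y := by
    rw [Finset.disjoint_left]
    intro v hvX hvY
    rw [hX, Finset.mem_filter] at hvX
    rw [hY, Finset.mem_filter] at hvY
    nlinarith [hvX.2, hvY.2]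
  have hind : ∀ e ∈ H, ¬ e ⊆ X := by
    intro e he hsub
    have hcard := hunif e he
    have hle : ∑ v ∈ e, y v ≤ ∑ _v ∈ e, (-t) := by
      refine Finset.sum_le_sum ?_
      intro v hv
      have := hsub hv
      rw [hX, Finset.mem_filter] at this
      exact this.2
    rw [Finset.sum_const, hcard, nsmul_eq_mul] at hle
    have h0 := hy e he
    have : (0:ℝ) < (r : ℝ) := by exact_mod_cast (by omega : 0 < r)
    nlinarith
  obtain ⟨e, he, ⟨x, hx⟩, hdisjY⟩ := hexp X Y hdisj hXne hind hcon
  have hxe : x ∈ e := (Finset.mem_inter.1 hx).1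
  have hxX : x ∈ X := (Finset.mem_inter.1 hx).2
  have hxy : y x ≤ -t := by
    rw [hX, Finset.mem_filter] at hxX; exact hxX.2
  have hcard := hunif e he
  have hne : (e.erase x).Nonempty := by
    rw [← Finset.card_pos, Finset.card_erase_of_mem hxe, hcard]; omega
  have hsum : ∑ v ∈ e.erase x, y v < ∑ _v ∈ e.erase x, (t / ((r - 1 : ℕ) : ℝ)) := by
    refine Finset.sum_lt_sum_of_nonempty hne ?_
    intro v hv
    have hve : v ∈ e := Finset.mem_of_mem_erase hv
    have hvY : v ∉ Y := Finset.disjoint_left.1 hdisjY hve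
    rw [hY, Finset.mem_filter] at hvY
    push_neg at hvY
    have := hvY (Finset.mem_univ v)
    rw [lt_div_iff₀ hkR, mul_comm]
    linarith
  rw [Finset.sum_const, Finset.card_erase_of_mem hxe, hcard, nsmul_eq_mul] at hsum
  have heq : ∑ v ∈ e, y v = y x + ∑ v ∈ e.erase x, y v := (Finset.add_sum_erase e y hxe).symm
  have h0 := hy e he
  have hmul : ((r - 1 : ℕ) : ℝ) * (t / ((r - 1 : ℕ) : ℝ)) = t := by
    rw [mul_comm]
    exact div_mul_cancel₀ t (ne_of_gt hkR)
  rw [hmul] at hsum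
  linarith

private lemma sum_pos_of_neg {V : Type*} [Fintype V] [DecidableEq V] (r : ℕ) (hr : 2 ≤ r)
    (H : Finset (Finset V)) (hunif : ∀ e ∈ H, e.card = r)
    (hexp : ∀ X Y : Finset V, Disjoint X Y → X.Nonempty →
      (∀ e ∈ H, ¬ e ⊆ X) → Y.card ≤ (r - 1) * X.card →
      ∃ e ∈ H, (e ∩ X).Nonempty ∧ Disjoint e Y)
    (y : V → ℝ) (hy : ∀ e ∈ H, 0 ≤ ∑ v ∈ e, y v) (hneg : ∃ v, y v < 0) :
    0 < ∑ v, y v :=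
  count_pos (r - 1) (by omega) y (key r hr H hunif hexp y hy) hneg

private lemma sum_nonneg_of {V : Type*} [Fintype V] [DecidableEq V] (r : ℕ) (hr : 2 ≤ r)
    (H : Finset (Finset V)) (hunif : ∀ e ∈ H, e.card = r)
    (hexp : ∀ X Y : Finset V, Disjoint X Y → X.Nonempty →
      (∀ e ∈ H, ¬ e ⊆ X) → Y.card ≤ (r - 1) * X.card →
      ∃ e ∈ H, (e ∩ X).Nonempty ∧ Disjoint e Y)
    (y : V → ℝ) (hy : ∀ e ∈ H, 0 ≤ ∑ v ∈ e, y v) : 0 ≤ ∑ v, y v := by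
  by_cases h : ∃ v, y v < 0
  · exact (sum_pos_of_neg r hr H hunif hexp y hy h).le
  · push_neg at h
    exact Finset.sum_nonneg fun v _ => h v


private lemma farkas {V ι : Type*} [Fintype V] [DecidableEq ι] (s : Finset ι) :
    ∀ (v : ι → V → ℝ) (b : V → ℝ),
      (∀ y : V → ℝ, (∀ i ∈ s, 0 ≤ ∑ x, y x * v i x) → 0 ≤ ∑ x, y x * b x) →
      ∃ c : ι → ℝ, (∀ i, 0 ≤ c i) ∧ ∀ x, b x = ∑ i ∈ s, c i * v i x := by
  classical
  induction s using Finset.induction_on with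
  | empty =>
    intro v b h
    refine ⟨0, fun i => le_rfl, fun x => ?_⟩
    have h0 := h (fun x => -b x) (by simp)
    have hsq : ∑ x, b x * b x ≤ 0 := by
      have : ∑ x : V, -b x * b x = -∑ x : V, b x * b x := by
        rw [← Finset.sum_neg_distrib]
        exact Finset.sum_congr rfl fun x _ => by ring
      rw [this] at h0
      linarith
    have hx : b x * b x ≤ 0 := by
      have hnn : ∀ z ∈ Finset.univ, 0 ≤ b z * b z := fun z _ => mul_self_nonneg _
      calc b x * b x ≤ ∑ z, b z * b z := Finset.single_le_sum hnn (Finset.mem_univ x)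
        _ ≤ 0 := hsq
    have : b x = 0 := by nlinarith [mul_self_nonneg (b x)]
    simp [this]
  | @insert a s₀ ha ih =>
    intro v b h
    by_cases hc : ∀ y : V → ℝ, (∀ i ∈ s₀, 0 ≤ ∑ x, y x * v i x) → 0 ≤ ∑ x, y x * b x
    · obtain ⟨c, hc0, hcb⟩ := ih v b hc
      refine ⟨fun i => if i ∈ s₀ then c i else 0, fun i => by dsimp only; split_ifs with h' <;> simp [hc0 i], fun x => ?_⟩
      dsimp only
      rw [Finset.sum_insert ha, if_neg ha, zero_mul, zero_add, hcb x]
      exact Finset.sum_congr rfl fun i hi => by rw [if_pos hi]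
    · push_neg at hc
      obtain ⟨y₀, hy1, hy2⟩ := hc
      set d : ℝ := ∑ x, y₀ x * v a x with hd
      have hdneg : d < 0 := by
        by_contra hdn
        push_neg at hdn
        refine absurd (h y₀ ?_) (by linarith)
        intro i hi
        rcases Finset.mem_insert.1 hi with rfl | hi
        · exact hdn
        · exact hy1 i hi
      set v' : ι → V → ℝ := fun i x => v i x - ((∑ x', y₀ x' * v i x') / d) * v a x with hv'
      set b' : V → ℝ := fun x => b x - ((∑ x', y₀ x' * b x') / d) * v a x with hb'
      have hdot : ∀ (g u : V → ℝ),
          ∑ x, g x * (u x - ((∑ x', y₀ x' * u x') / d) * v a x)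
            = ∑ x, g x * u x - ((∑ x', y₀ x' * u x') / d) * ∑ x, g x * v a x := by
        intro g u
        rw [Finset.mul_sum, ← Finset.sum_sub_distrib]
        exact Finset.sum_congr rfl fun x _ => by ring
      have hIH := ih v' b' ?_
      · obtain ⟨c, hc0, hrep⟩ := hIH
        set μ : ℝ := (∑ x, y₀ x * b x) / d
          - ∑ i ∈ s₀, c i * ((∑ x, y₀ x * v i x) / d) with hμ
        have hμ0 : 0 ≤ μ := by
          have h1 : 0 < (∑ x, y₀ x * b x) / d := div_pos_of_neg_of_neg hy2 hdneg
          have h2 : ∑ i ∈ s₀, c i * ((∑ x, y₀ x * v i x) / d) ≤ 0 := by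
            refine Finset.sum_nonpos fun i hi => ?_
            have := hy1 i hi
            have hdiv : (∑ x, y₀ x * v i x) / d ≤ 0 := div_nonpos_of_nonneg_of_nonpos this hdneg.le
            exact mul_nonpos_of_nonneg_of_nonpos (hc0 i) hdiv
          rw [hμ]; linarith
        refine ⟨fun i => if i = a then μ else if i ∈ s₀ then c i else 0, ?_, ?_⟩
        · intro i
          dsimp only
          split_ifs with h1 h2
          · exact hμ0
          · exact hc0 i
          · exact le_rfl
        · intro x
          dsimp only
          rw [Finset.sum_insert ha, if_pos rfl]
          have hsum0 : ∑ i ∈ s₀, (if i = a then μ else if i ∈ s₀ then c i else 0) * v i x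
              = ∑ i ∈ s₀, c i * v i x := by
            refine Finset.sum_congr rfl fun i hi => ?_
            rw [if_neg (by rintro rfl; exact ha hi), if_pos hi]
          rw [hsum0]
          have hr := hrep x
          rw [hb', hv'] at hr
          simp only at hr
          have hexpand : ∑ i ∈ s₀, c i * (v i x - ((∑ x', y₀ x' * v i x') / d) * v a x)
              = ∑ i ∈ s₀, c i * v i x
                - (∑ i ∈ s₀, c i * ((∑ x', y₀ x' * v i x') / d)) * v a x := by
            rw [Finset.sum_mul, ← Finset.sum_sub_distrib]
            exact Finset.sum_congr rfl fun i _ => by ring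
          rw [hexpand] at hr
          rw [hμ]
          linarith [hr]
      · intro y hy
        set z : V → ℝ := fun x => y x - ((∑ x', y x' * v a x') / d) * y₀ x with hz
        have hzdot : ∀ u : V → ℝ,
            ∑ x, z x * u x = ∑ x, y x * u x - ((∑ x', y x' * v a x') / d) * ∑ x, y₀ x * u x := by
          intro u
          rw [hz, Finset.mul_sum, ← Finset.sum_sub_distrib]
          exact Finset.sum_congr rfl fun x _ => by ring
        have hmain := h z ?_
        · have : ∑ x, z x * b x = ∑ x, y x * b' x := by
            rw [hzdot b, hb', hdot y b]
            ring
          rw [this] at hmain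
          exact hmain
        · intro i hi
          rcases Finset.mem_insert.1 hi with rfl | hi
          · rw [hzdot (v i), ← hd]
            rw [div_mul_cancel₀ _ (ne_of_lt hdneg)]
            ring_nf
            exact le_rfl
          · have : ∑ x, z x * v i x = ∑ x, y x * v' i x := by
              rw [hzdot (v i), hv', hdot y (v i)]
              ring
            rw [this]
            exact hy i hi

/-- If `H` is an `r`-graph on a finite vertex set `V` such that for all
disjoint `X, Y ⊆ V` with `X` nonempty and independent and `|Y| ≤ (r-1)|X|` there is an
edge meeting `X` and disjoint from `Y`, then `H` has a perfect fractional matching and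
the constant function `1/r` is the only fractional cover of weight `n/r`. -/
theorem stmt1 {V : Type*} [Fintype V] [DecidableEq V] (r : ℕ) (hr : 2 ≤ r)
    (H : Finset (Finset V)) (hunif : ∀ e ∈ H, e.card = r)
    (hexp : ∀ X Y : Finset V, Disjoint X Y → X.Nonempty →
      (∀ e ∈ H, ¬ e ⊆ X) → Y.card ≤ (r - 1) * X.card →
      ∃ e ∈ H, (e ∩ X).Nonempty ∧ Disjoint e Y) :
    (∃ φ : Finset V → ℝ, (∀ e ∈ H, 0 ≤ φ e ∧ φ e ≤ 1) ∧
        (∀ v : V, ∑ e ∈ H with v ∈ e, φ e ≤ 1) ∧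
        ∑ e ∈ H, φ e = (Fintype.card V : ℝ) / r) ∧
      (∀ w : V → ℝ, (∀ v, 0 ≤ w v ∧ w v ≤ 1) →
        (∀ e ∈ H, 1 ≤ ∑ v ∈ e, w v) →
        (∑ v : V, w v = (Fintype.card V : ℝ) / r) →
        ∀ v : V, w v = 1 / r) := by
  have hrR : (0 : ℝ) < (r : ℝ) := by exact_mod_cast (by omega : 0 < r)
  have hite : ∀ (y : V → ℝ) (e : Finset V), ∑ x, y x * (if x ∈ e then (1:ℝ) else 0)
      = ∑ x ∈ e, y x := by
    intro y e
    rw [show ∑ x, y x * (if x ∈ e then (1:ℝ) else 0) = ∑ x, (if x ∈ e then y x else 0) from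
      Finset.sum_congr rfl fun x _ => by split_ifs <;> ring]
    rw [Finset.sum_ite_mem, Finset.univ_inter]
  constructor
  · -- existence of perfect fractional matching
    obtain ⟨c, hc0, hcb⟩ := farkas (V := V) (ι := Finset V) H
      (fun e x => if x ∈ e then (1:ℝ) else 0) (fun _ => 1)
      (by
        intro y hy
        have hy' : ∀ e ∈ H, 0 ≤ ∑ v ∈ e, y v := by
          intro e he
          have := hy e he
          rwa [hite] at this
        have h0 := sum_nonneg_of r hr H hunif hexp y hy'
        calc (0:ℝ) ≤ ∑ v, y v := h0
          _ = ∑ x, y x * 1 := by simp)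
    have hcov : ∀ x : V, ∑ e ∈ H with x ∈ e, c e = 1 := by
      intro x
      have := (hcb x).symm
      rw [Finset.sum_filter]
      rw [show ∑ e ∈ H, (if x ∈ e then c e else 0)
          = ∑ e ∈ H, c e * (if x ∈ e then (1:ℝ) else 0) from
        Finset.sum_congr rfl fun e _ => by split_ifs <;> ring]
      exact this
    refine ⟨c, ?_, ?_, ?_⟩
    · intro e he
      refine ⟨hc0 e, ?_⟩
      have hne : e.Nonempty := by
        rw [← Finset.card_pos, hunif e he]; omega
      obtain ⟨x, hx⟩ := hne
      calc c e ≤ ∑ e' ∈ H with x ∈ e', c e' := by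
            refine Finset.single_le_sum (fun e' _ => hc0 e') ?_
            exact Finset.mem_filter.2 ⟨he, hx⟩
        _ = 1 := hcov x
    · intro v
      exact (hcov v).le
    · have hdouble : (r : ℝ) * ∑ e ∈ H, c e = Fintype.card V := by
        have h1 : ∑ x : V, ∑ e ∈ H with x ∈ e, c e = (Fintype.card V : ℝ) := by
          rw [Finset.sum_congr rfl fun x _ => hcov x]
          simp
        have h2 : ∑ x : V, ∑ e ∈ H with x ∈ e, c e = (r : ℝ) * ∑ e ∈ H, c e := by
          have : ∀ x : V, ∑ e ∈ H with x ∈ e, c e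
              = ∑ e ∈ H, (if x ∈ e then c e else 0) := fun x => Finset.sum_filter _ _
          rw [Finset.sum_congr rfl fun x _ => this x, Finset.sum_comm]
          rw [Finset.mul_sum]
          refine Finset.sum_congr rfl fun e he => ?_
          rw [Finset.sum_ite_mem, Finset.univ_inter, Finset.sum_const, hunif e he,
            nsmul_eq_mul]
        rw [← h2, h1]
      field_simp at hdouble ⊢
      linarith
  · -- uniqueness of the fractional cover
    intro w hw hcov hsum v
    set y : V → ℝ := fun u => w u - 1 / r with hy
    have hyedge : ∀ e ∈ H, 0 ≤ ∑ u ∈ e, y u := by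
      intro e he
      rw [hy]
      rw [Finset.sum_sub_distrib, Finset.sum_const, hunif e he, nsmul_eq_mul]
      have : (r : ℝ) * (1 / r) = 1 := by field_simp
      rw [this]
      linarith [hcov e he]
    have hytot : ∑ u, y u = 0 := by
      rw [hy]
      rw [Finset.sum_sub_distrib, Finset.sum_const, Finset.card_univ, nsmul_eq_mul, hsum]
      field_simp
      ring
    have hynn : ∀ u, 0 ≤ y u := by
      intro u
      by_contra hc
      push_neg at hc
      have := sum_pos_of_neg r hr H hunif hexp y hyedge ⟨u, hc⟩
      rw [hytot] at this
      exact lt_irrefl 0 this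
    have : y v = 0 := by
      have := (Finset.sum_eq_zero_iff_of_nonneg (fun u _ => hynn u)).1 hytot
      exact this v (Finset.mem_univ v)
    rw [hy] at this
    simp only at this
    linarith
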